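/- arXiv:0807.2714 — 2 statements merged into one kernel-verified Lean document; each statement's English description precedes it below -/
import Mathlib

section
/- Fix integers n ≥ 2, k, r with n ≥ k+1 ≥ 2 and r−1 ≥ 1. Suppose λ ∈ ℤ^n is (k+1, r−1)-admissible and, for some 0 ≤ i ≤ n, the element s_i·λ is not (k+1, r−1)-admissible. Then 1 ≤ i ≤ n−1; the element s_i·λ has exactly one (k+1, r−1)-neighborhood, namely the pair (i, i+1) or the pair (i+1, i); and (s_i·λ)_i − (s_i·λ)_{i+1} = −(r−1) and ρ(s_i·λ)_i − ρ(s_i·λ)_{i+1} = −k. -/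
open scoped Classical

namespace CCnDAHA

variable {n : ℕ}




/-- σ(λ)_i = +1 if λ_i ≥ 0, −1 otherwise. -/
def sgn (lam : Fin n → ℤ) (i : Fin n) : ℤ := if 0 ≤ lam i then 1 else -1

/-- `Prec lam i j` : index `i` strictly precedes `j` in the ordering i_1,…,i_n. -/
def Prec (lam : Fin n → ℤ) (i j : Fin n) : Prop :=
  |lam j| < |lam i| ∨
    (|lam i| = |lam j| ∧
      ((0 ≤ lam i ∧ lam j < 0) ∨
       (0 ≤ lam i ∧ 0 ≤ lam j ∧ i < j) ∨
       (lam i < 0 ∧ lam j < 0 ∧ j < i)))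

/-- 0-based position of index `i` in the ordering i_1,…,i_n (position m−1). -/
noncomputable def posOf (lam : Fin n → ℤ) (i : Fin n) : ℕ :=
  (Finset.univ.filter (fun j => Prec lam j i)).card

/-- ρ(λ)_i = σ(λ)_i · (n − m) where i = i_m. -/
noncomputable def rho (lam : Fin n → ℤ) (i : Fin n) : ℤ :=
  sgn lam i * ((n : ℤ) - 1 - (posOf lam i : ℤ))

/-- (a,b)-neighborhood. -/
noncomputable def IsNbhd (a b : ℤ) (lam : Fin n → ℤ) (i j : Fin n) : Prop :=
  |rho lam i| - |rho lam j| = a - 1 ∧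
  |lam i| - |lam j| ≤ b ∧
  (|lam i| - |lam j| = b →
    ((0 ≤ lam i ∧ 0 ≤ lam j ∧ j < i) ∨
     (lam i < 0 ∧ lam j < 0 ∧ i < j) ∨
     (lam i < 0 ∧ 0 ≤ lam j)))

/-- (a,b)-admissible: no (a,b)-neighborhood. -/
noncomputable def Admissible (a b : ℤ) (lam : Fin n → ℤ) : Prop :=
  ∀ i j, ¬ IsNbhd a b lam i j

/-- number of (a,b)-neighborhoods. -/
noncomputable def nbhdCount (a b : ℤ) (lam : Fin n → ℤ) : ℕ :=
  ((Finset.univ : Finset (Fin n × Fin n)).filter (fun p => IsNbhd a b lam p.1 p.2)).card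

/-- dot action of the affine simple reflection s_i (0 ≤ i ≤ n, 1-based paper indexing). -/
noncomputable def dotAct (i : ℕ) (lam : Fin n → ℤ) : Fin n → ℤ := fun j =>
  if i = 0 then (if (j : ℕ) = 0 then -1 - lam j else lam j)
  else if i = n then (if (j : ℕ) + 1 = n then -lam j else lam j)
  else if h1 : (j : ℕ) + 1 = i ∧ i < n then lam ⟨(j : ℕ) + 1, by omega⟩
  else if h2 : (j : ℕ) = i then lam ⟨(j : ℕ) - 1, by have := j.isLt; omega⟩
  else lam j

/-- pairing ⟨λ, α_i⟩, for 0 ≤ i ≤ n. -/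
noncomputable def pairing (i : ℕ) (lam : Fin n → ℤ) : ℤ :=
  if hn : n = 0 then 0
  else if i = 0 then -2 * lam ⟨0, by omega⟩
  else if i = n then 2 * lam ⟨n - 1, by omega⟩
  else lam ⟨(i - 1) % n, Nat.mod_lt _ (by omega)⟩ - lam ⟨i % n, Nat.mod_lt _ (by omega)⟩

/-- partial sum λ_1 + ⋯ + λ_j. -/
def psum (lam : Fin n → ℤ) (j : Fin n) : ℤ :=
  ∑ i ∈ Finset.univ.filter (fun i => i ≤ j), lam i

/-- dominance order: μ ≤ λ. -/
def DomLE (mu lam : Fin n → ℤ) : Prop := ∀ j, psum mu j ≤ psum lam j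

/-- λ⁺ : the weakly decreasing rearrangement of (|λ_1|,…,|λ_n|). -/
noncomputable def lamPlus (lam : Fin n → ℤ) : Fin n → ℤ := fun j =>
  ((Multiset.sort (Multiset.map (fun i => |lam i|) Finset.univ.val) (· ≤ ·)).reverse).getD (j : ℕ) 0

/-- λ ≻ μ. -/
noncomputable def SuccOrd (lam mu : Fin n → ℤ) : Prop :=
  (DomLE (lamPlus mu) (lamPlus lam) ∧ lamPlus lam ≠ lamPlus mu) ∨
  (lamPlus lam = lamPlus mu ∧ DomLE mu lam ∧ lam ≠ mu)

/-- |λ_{i_m}|, with the sentinel value 0 at m = n+1. -/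
noncomputable def absAt (lam : Fin n → ℤ) (m : ℕ) : ℤ :=
  if m = n + 1 then 0
  else ∑ i ∈ Finset.univ.filter (fun i => posOf lam i + 1 = m), |lam i|

/-- σ(λ)_{i_m}, with sentinel value +1 at m = n+1. -/
noncomputable def sgAt (lam : Fin n → ℤ) (m : ℕ) : ℤ :=
  if m = n + 1 then 1
  else ∑ i ∈ Finset.univ.filter (fun i => posOf lam i + 1 = m), sgn lam i

/-- the (1-based) value of the index i_m, with sentinel value n+1 at m = n+1. -/
noncomputable def ixAt (lam : Fin n → ℤ) (m : ℕ) : ℕ :=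
  if m = n + 1 then n + 1
  else ∑ i ∈ Finset.univ.filter (fun i => posOf lam i + 1 = m), ((i : ℕ) + 1)

/-- β_m ∈ {0,1}. -/
noncomputable def betaAt (lam : Fin n → ℤ) (m : ℕ) : ℤ :=
  if (sgAt lam m = 1 ∧ sgAt lam (m + 1) = 1 ∧ ixAt lam (m + 1) < ixAt lam m) ∨
     (sgAt lam m = -1 ∧ sgAt lam (m + 1) = -1 ∧ ixAt lam m < ixAt lam (m + 1)) ∨
     (sgAt lam m = -1 ∧ sgAt lam (m + 1) = 1)
  then 1 else 0

/-- p_m = ⌊(|λ_{i_m}| − |λ_{i_{m+1}}| − β_m)/b⌋ (b plays the role of r−1). -/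
noncomputable def pAt (b : ℤ) (lam : Fin n → ℤ) (m : ℕ) : ℤ :=
  Int.fdiv (absAt lam m - absAt lam (m + 1) - betaAt lam m) b

/-- the b-quotient λ^{quot} (b plays the role of r−1): j-th entry is p_j + ⋯ + p_n
(1-based j = (j:Fin n) + 1). -/
noncomputable def quotOf (b : ℤ) (lam : Fin n → ℤ) : Fin n → ℤ := fun j =>
  ∑ m ∈ Finset.Icc ((j : ℕ) + 1) n, pAt b lam m

/-- fundamental weight ϖ_j (1-based j = (j : Fin n)+1): first j entries 1, rest 0. -/
def varpi (j : Fin n) : Fin n → ℤ := fun i => if i ≤ j then 1 else 0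



lemma prec_irrefl (lam : Fin n → ℤ) (x : Fin n) : ¬ Prec lam x x := by
  rintro (h | ⟨-, (⟨h1, h2⟩ | ⟨-, -, h⟩ | ⟨-, -, h⟩)⟩)
  · exact absurd h (lt_irrefl _)
  · omega
  · exact absurd h (lt_irrefl _)
  · exact absurd h (lt_irrefl _)

lemma prec_congr {lam mu : Fin n → ℤ} {x y x' y' : Fin n}
    (hx : mu x = lam x') (hy : mu y = lam y')
    (h1 : x < y ↔ x' < y') (h2 : y < x ↔ y' < x') :
    Prec mu x y ↔ Prec lam x' y' := by
  unfold Prec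
  rw [hx, hy]
  simp only [h1, h2]

lemma prec_iff_not {lam : Fin n → ℤ} {x y : Fin n} (h : x ≠ y) :
    Prec lam x y ↔ ¬ Prec lam y x := by
  unfold Prec
  rcases h.lt_or_gt with hlt | hlt <;>
  rcases le_or_gt 0 (lam x) with hx | hx <;>
  rcases le_or_gt 0 (lam y) with hy | hy <;>
  simp only [abs_of_nonneg, abs_of_neg, hx, hy, hlt, lt_asymm hlt, iff_true, iff_false,
    true_and, and_true, and_false, false_and, true_or, or_true, or_false, false_or] <;>
  omega

lemma posOf_congr {lam mu : Fin n → ℤ} (e : Equiv.Perm (Fin n))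
    (h : ∀ x y, Prec mu x y ↔ Prec lam (e x) (e y)) (x : Fin n) :
    posOf mu x = posOf lam (e x) := by
  unfold posOf
  apply Finset.card_bij (fun a _ => e a)
  · intro a ha
    simp only [Finset.mem_filter, Finset.mem_univ, true_and] at ha ⊢
    exact (h a x).1 ha
  · intro a _ b _ hab
    exact e.injective hab
  · intro b hb
    simp only [Finset.mem_filter, Finset.mem_univ, true_and] at hb
    refine ⟨e.symm b, ?_, by simp⟩
    simp only [Finset.mem_filter, Finset.mem_univ, true_and]
    rw [h]
    simpa using hb

lemma prec_update {lam mu : Fin n → ℤ} {z : Fin n} (hmu : ∀ j, j ≠ z → mu j = lam j)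
    (hz : ∀ j, j ≠ z → (Prec mu z j ↔ Prec lam z j)) (x y : Fin n) :
    Prec mu x y ↔ Prec lam x y := by
  by_cases hxy : x = y
  · subst hxy
    exact iff_of_false (prec_irrefl _ _) (prec_irrefl _ _)
  by_cases hx : x = z
  · subst hx
    exact hz y (Ne.symm hxy)
  by_cases hy : y = z
  · subst hy
    exact (prec_iff_not hxy).trans ((not_congr (hz x hx)).trans (prec_iff_not hxy).symm)
  · exact prec_congr (hmu x hx) (hmu y hy) Iff.rfl Iff.rfl

lemma swap_val (p q x : Fin n) :
    ((Equiv.swap p q x : Fin n) : ℕ) = if x = p then (q:ℕ) else if x = q then (p:ℕ) else (x:ℕ) := by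
  rw [Equiv.swap_apply_def]
  split_ifs <;> rfl

lemma swap_lt_iff {p q x y : Fin n} (hpq : (p:ℕ)+1 = (q:ℕ))
    (h1 : ¬(x = p ∧ y = q)) (h2 : ¬(x = q ∧ y = p)) :
    (x < y ↔ Equiv.swap p q x < Equiv.swap p q y) := by
  simp only [Fin.ext_iff] at h1 h2
  simp only [Fin.lt_def, swap_val]
  split_ifs <;> simp_all [Fin.ext_iff] <;> omega

lemma prec_swap {lam : Fin n → ℤ} {p q : Fin n} (hpq : (p:ℕ)+1 = (q:ℕ))
    (hne : lam p ≠ lam q) (x y : Fin n) :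
    Prec (lam ∘ Equiv.swap p q) x y ↔ Prec lam (Equiv.swap p q x) (Equiv.swap p q y) := by
  have hplt : p < q := Fin.lt_def.2 (by omega)
  have hnlt : ¬ q < p := by rw [Fin.lt_def]; omega
  by_cases hA : x = p ∧ y = q
  · rw [hA.1, hA.2]
    unfold Prec
    simp only [Function.comp_apply, Equiv.swap_apply_left, Equiv.swap_apply_right,
      hplt, hnlt, iff_true, iff_false,
      true_and, and_true, and_false, false_and, true_or, or_true, or_false, false_or]
    rcases abs_cases (lam p) with ⟨e1, s1⟩ | ⟨e1, s1⟩ <;>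
    rcases abs_cases (lam q) with ⟨e2, s2⟩ | ⟨e2, s2⟩ <;>
    rw [e1, e2] <;> omega
  by_cases hB : x = q ∧ y = p
  · rw [hB.1, hB.2]
    unfold Prec
    simp only [Function.comp_apply, Equiv.swap_apply_left, Equiv.swap_apply_right,
      hplt, hnlt, iff_true, iff_false,
      true_and, and_true, and_false, false_and, true_or, or_true, or_false, false_or]
    rcases abs_cases (lam p) with ⟨e1, s1⟩ | ⟨e1, s1⟩ <;>
    rcases abs_cases (lam q) with ⟨e2, s2⟩ | ⟨e2, s2⟩ <;>
    rw [e1, e2] <;> omega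
  · exact prec_congr rfl rfl (swap_lt_iff hpq hA hB)
      (swap_lt_iff hpq (fun h => hB ⟨h.2, h.1⟩) (fun h => hA ⟨h.2, h.1⟩))

lemma posOf_lt (lam : Fin n → ℤ) (x : Fin n) : posOf lam x < n := by
  unfold posOf
  have : (Finset.univ.filter (fun j => Prec lam j x)) ⊆ Finset.univ.erase x := by
    intro j hj
    simp only [Finset.mem_filter] at hj
    refine Finset.mem_erase.2 ⟨?_, Finset.mem_univ _⟩
    rintro rfl; exact prec_irrefl lam _ hj.2
  calc _ ≤ (Finset.univ.erase x).card := Finset.card_le_card this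
    _ < Finset.univ.card := Finset.card_erase_lt_of_mem (Finset.mem_univ x)
    _ = n := by simp

lemma abs_rho (lam : Fin n → ℤ) (x : Fin n) :
    |rho lam x| = (n : ℤ) - 1 - (posOf lam x : ℤ) := by
  have h1 : (0:ℤ) ≤ (n : ℤ) - 1 - (posOf lam x : ℤ) := by
    have := posOf_lt lam x; omega
  unfold rho sgn
  split <;> rw [abs_mul] <;> simp [abs_of_nonneg h1]

lemma dotAct0_z (hn : 0 < n) (lam : Fin n → ℤ) :
    dotAct 0 lam ⟨0, hn⟩ = -1 - lam ⟨0, hn⟩ := by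
  simp [dotAct]

lemma dotAct0_ne (lam : Fin n → ℤ) (j : Fin n) (hj : (j : ℕ) ≠ 0) :
    dotAct 0 lam j = lam j := by
  simp [dotAct, hj]

lemma dotActn_z (hn : 0 < n) (lam : Fin n → ℤ) :
    dotAct n lam ⟨n - 1, by omega⟩ = - lam ⟨n - 1, by omega⟩ := by
  have h0 : n ≠ 0 := by omega
  simp only [dotAct, if_neg h0, if_pos rfl]
  have hcond : n - 1 + 1 = n := by omega
  rw [if_pos hcond]
  simp

lemma dotActn_ne (hn : 0 < n) (lam : Fin n → ℤ) (j : Fin n) (hj : (j : ℕ) + 1 ≠ n) :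
    dotAct n lam j = lam j := by
  have h0 : n ≠ 0 := by omega
  simp [dotAct, h0, hj]


lemma dotAct_swap (lam : Fin n → ℤ) (i : ℕ) (h0 : i ≠ 0) (hin : i < n) :
    dotAct i lam = lam ∘ Equiv.swap ⟨i - 1, by omega⟩ ⟨i, hin⟩ := by
  have hnn : i ≠ n := Nat.ne_of_lt hin
  have hlt : i - 1 < n := by omega
  funext j
  simp only [dotAct, if_neg h0, if_neg hnn, Function.comp_apply]
  by_cases hj1 : (j : ℕ) + 1 = i
  · rw [dif_pos ⟨hj1, hin⟩]
    have hj : j = (⟨i - 1, hlt⟩ : Fin n) := Fin.ext (by simp; omega)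
    have hsw : Equiv.swap (⟨i - 1, hlt⟩ : Fin n) ⟨i, hin⟩ j = ⟨i, hin⟩ := by
      rw [hj]; exact Equiv.swap_apply_left _ _
    rw [hsw]
    congr 1
    apply Fin.ext; simp; omega
  · rw [dif_neg (by tauto)]
    by_cases hj2 : (j : ℕ) = i
    · rw [dif_pos hj2]
      have hj : j = (⟨i, hin⟩ : Fin n) := Fin.ext (by simp [hj2])
      have hsw : Equiv.swap (⟨i - 1, hlt⟩ : Fin n) ⟨i, hin⟩ j = ⟨i - 1, hlt⟩ := by
        rw [hj]; exact Equiv.swap_apply_right _ _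
      rw [hsw]
      congr 1
      apply Fin.ext; simp; omega
    · rw [dif_neg hj2]
      rw [Equiv.swap_apply_of_ne_of_ne]
      · intro h; apply hj1; rw [Fin.ext_iff] at h; simp at h; omega
      · intro h; apply hj2; rw [Fin.ext_iff] at h; simpa using h

lemma prec_dotAct0 (hn : 0 < n) (lam : Fin n → ℤ) (x y : Fin n) :
    Prec (dotAct 0 lam) x y ↔ Prec lam x y := by
  apply prec_update (z := ⟨0, hn⟩)
  · intro j hj
    exact dotAct0_ne lam j (by simpa [Fin.ext_iff] using hj)
  · intro j hj
    have hj0 : (j : ℕ) ≠ 0 := by simpa [Fin.ext_iff] using hj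
    have hzy : (⟨0, hn⟩ : Fin n) < j := by rw [Fin.lt_def]; simpa using Nat.pos_of_ne_zero hj0
    have hyz : ¬ j < (⟨0, hn⟩ : Fin n) := by rw [Fin.lt_def]; simp
    unfold Prec
    rw [dotAct0_z hn, dotAct0_ne lam j hj0]
    simp only [hzy, hyz, iff_true, iff_false, true_and, and_true, and_false, false_and,
      true_or, or_true, or_false, false_or]
    rcases abs_cases (lam ⟨0, hn⟩) with ⟨e1, s1⟩ | ⟨e1, s1⟩ <;>
    rcases abs_cases (lam j) with ⟨e2, s2⟩ | ⟨e2, s2⟩ <;>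
    rcases abs_cases (-1 - lam ⟨0, hn⟩) with ⟨e3, s3⟩ | ⟨e3, s3⟩ <;>
    simp only [e1, e2, e3] <;> omega

lemma prec_dotActn (hn : 0 < n) (lam : Fin n → ℤ) (x y : Fin n) :
    Prec (dotAct n lam) x y ↔ Prec lam x y := by
  apply prec_update (z := ⟨n - 1, by omega⟩)
  · intro j hj
    have hjv : (j : ℕ) ≠ n - 1 := fun h => hj (Fin.ext (by simpa using h))
    exact dotActn_ne hn lam j (by have := j.isLt; omega)
  · intro j hj
    have := j.isLt
    have hj0 : (j : ℕ) + 1 ≠ n := by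
      have hjv : (j : ℕ) ≠ n - 1 := fun h => hj (Fin.ext (by simpa using h))
      omega
    have hzy : ¬ (⟨n - 1, by omega⟩ : Fin n) < j := by rw [Fin.lt_def]; simp; omega
    have hyz : j < (⟨n - 1, by omega⟩ : Fin n) := by rw [Fin.lt_def]; simp; omega
    unfold Prec
    rw [dotActn_z hn, dotActn_ne hn lam j hj0]
    simp only [hzy, hyz, iff_true, iff_false, true_and, and_true, and_false, false_and,
      true_or, or_true, or_false, false_or, abs_neg, Left.nonneg_neg_iff, Left.neg_neg_iff]
    rcases abs_cases (lam ⟨n - 1, by omega⟩) with ⟨e1, s1⟩ | ⟨e1, s1⟩ <;>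
    rcases abs_cases (lam j) with ⟨e2, s2⟩ | ⟨e2, s2⟩ <;>
    simp only [e1, e2] <;> omega

lemma adm_dotAct0 (hn : 2 ≤ n) {a b : ℤ} (ha : 2 ≤ a) (hb : 1 ≤ b) {lam : Fin n → ℤ}
    (hadm : Admissible a b lam) : Admissible a b (dotAct 0 lam) := by
  have hn0 : 0 < n := by omega
  set z : Fin n := ⟨0, hn0⟩
  have hzval : (z : ℕ) = 0 := rfl
  have hpos : ∀ w, posOf (dotAct 0 lam) w = posOf lam w := fun w => by
    simpa using posOf_congr (Equiv.refl (Fin n))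
      (fun x y => by simpa using prec_dotAct0 hn0 lam x y) w
  have habs : ∀ w, |rho (dotAct 0 lam) w| = |rho lam w| := fun w => by
    rw [abs_rho, abs_rho, hpos]
  have hvz : dotAct 0 lam z = -1 - lam z := dotAct0_z hn0 lam
  have hv : ∀ w, w ≠ z → dotAct 0 lam w = lam w := fun w hw =>
    dotAct0_ne lam w (fun h => hw (Fin.ext (by omega)))
  rintro x y ⟨c1, c2, c3⟩
  rw [habs x, habs y] at c1
  by_cases hx : x = z <;> by_cases hy : y = z
  · subst hx; subst hy; omega
  · -- x = z, y ≠ z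
    subst hx
    have hy0 : (y : ℕ) ≠ 0 := fun h => hy (Fin.ext (by omega))
    rw [hvz, hv y hy] at c2 c3
    have hzy : z < y := by rw [Fin.lt_def]; omega
    have hyz : ¬ y < z := by rw [Fin.lt_def]; omega
    refine hadm z y ⟨c1, ?_, ?_⟩ <;>
    · rcases abs_cases (lam z) with ⟨e1, s1⟩ | ⟨e1, s1⟩ <;>
      rcases abs_cases (lam y) with ⟨e2, s2⟩ | ⟨e2, s2⟩ <;>
      rcases abs_cases (-1 - lam z) with ⟨e3, s3⟩ | ⟨e3, s3⟩ <;>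
      simp only [e1, e2, e3, hzy, hyz, iff_true, iff_false, true_and, and_true, and_false,
        false_and, true_or, or_true, or_false, false_or] at c2 c3 ⊢ <;>
      omega
  · -- x ≠ z, y = z
    subst hy
    have hx0 : (x : ℕ) ≠ 0 := fun h => hx (Fin.ext (by omega))
    rw [hv x hx, hvz] at c2 c3
    have hzx : z < x := by rw [Fin.lt_def]; omega
    have hxz : ¬ x < z := by rw [Fin.lt_def]; omega
    refine hadm x z ⟨c1, ?_, ?_⟩ <;>
    · rcases abs_cases (lam z) with ⟨e1, s1⟩ | ⟨e1, s1⟩ <;>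
      rcases abs_cases (lam x) with ⟨e2, s2⟩ | ⟨e2, s2⟩ <;>
      rcases abs_cases (-1 - lam z) with ⟨e3, s3⟩ | ⟨e3, s3⟩ <;>
      simp only [e1, e2, e3, hzx, hxz, iff_true, iff_false, true_and, and_true, and_false,
        false_and, true_or, or_true, or_false, false_or] at c2 c3 ⊢ <;>
      omega
  · rw [hv x hx, hv y hy] at c2 c3
    exact hadm x y ⟨c1, c2, c3⟩

lemma adm_dotActn (hn : 2 ≤ n) {a b : ℤ} (ha : 2 ≤ a) (hb : 1 ≤ b) {lam : Fin n → ℤ}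
    (hadm : Admissible a b lam) : Admissible a b (dotAct n lam) := by
  have hn0 : 0 < n := by omega
  set z : Fin n := ⟨n - 1, by omega⟩
  have hzval : (z : ℕ) = n - 1 := rfl
  have hpos : ∀ w, posOf (dotAct n lam) w = posOf lam w := fun w => by
    simpa using posOf_congr (Equiv.refl (Fin n))
      (fun x y => by simpa using prec_dotActn hn0 lam x y) w
  have habs : ∀ w, |rho (dotAct n lam) w| = |rho lam w| := fun w => by
    rw [abs_rho, abs_rho, hpos]
  have hvz : dotAct n lam z = - lam z := dotActn_z hn0 lam
  have hv : ∀ w, w ≠ z → dotAct n lam w = lam w := fun w hw =>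
    dotActn_ne hn0 lam w (fun h => hw (Fin.ext (by have := w.isLt; omega)))
  rintro x y ⟨c1, c2, c3⟩
  rw [habs x, habs y] at c1
  by_cases hx : x = z <;> by_cases hy : y = z
  · subst hx; subst hy; omega
  · -- x = z, y ≠ z
    subst hx
    have hy0 : (y : ℕ) ≠ n - 1 := fun h => hy (Fin.ext (by omega))
    rw [hvz, hv y hy] at c2 c3
    have hzy : ¬ z < y := by rw [Fin.lt_def]; have := y.isLt; omega
    have hyz : y < z := by rw [Fin.lt_def]; have := y.isLt; omega
    refine hadm z y ⟨c1, ?_, ?_⟩ <;>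
    · rcases abs_cases (lam z) with ⟨e1, s1⟩ | ⟨e1, s1⟩ <;>
      rcases abs_cases (lam y) with ⟨e2, s2⟩ | ⟨e2, s2⟩ <;>
      simp only [abs_neg, e1, e2, hzy, hyz, iff_true, iff_false, true_and, and_true, and_false,
        false_and, true_or, or_true, or_false, false_or, Left.nonneg_neg_iff,
        Left.neg_neg_iff] at c2 c3 ⊢ <;>
      omega
  · -- x ≠ z, y = z
    subst hy
    have hx0 : (x : ℕ) ≠ n - 1 := fun h => hx (Fin.ext (by omega))
    rw [hv x hx, hvz] at c2 c3
    have hzx : ¬ z < x := by rw [Fin.lt_def]; have := x.isLt; omega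
    have hxz : x < z := by rw [Fin.lt_def]; have := x.isLt; omega
    refine hadm x z ⟨c1, ?_, ?_⟩ <;>
    · rcases abs_cases (lam z) with ⟨e1, s1⟩ | ⟨e1, s1⟩ <;>
      rcases abs_cases (lam x) with ⟨e2, s2⟩ | ⟨e2, s2⟩ <;>
      simp only [abs_neg, e1, e2, hzx, hxz, iff_true, iff_false, true_and, and_true, and_false,
        false_and, true_or, or_true, or_false, false_or, Left.nonneg_neg_iff,
        Left.neg_neg_iff] at c2 c3 ⊢ <;>
      omega
  · rw [hv x hx, hv y hy] at c2 c3
    exact hadm x y ⟨c1, c2, c3⟩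


lemma rho_swap {lam : Fin n → ℤ} {p q : Fin n} (hpq : (p : ℕ) + 1 = (q : ℕ))
    (hne : lam p ≠ lam q) (u : Fin n) :
    rho (lam ∘ Equiv.swap p q) u = rho lam (Equiv.swap p q u) := by
  unfold rho
  rw [posOf_congr (Equiv.swap p q) (prec_swap hpq hne) u]
  rfl

lemma nbhd_swap {a b : ℤ} {lam : Fin n → ℤ} {p q : Fin n} (hpq : (p : ℕ) + 1 = (q : ℕ))
    (hne : lam p ≠ lam q) {x y : Fin n} (h1 : ¬(x = p ∧ y = q)) (h2 : ¬(x = q ∧ y = p)) :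
    IsNbhd a b (lam ∘ Equiv.swap p q) x y ↔
      IsNbhd a b lam (Equiv.swap p q x) (Equiv.swap p q y) := by
  unfold IsNbhd
  rw [rho_swap hpq hne x, rho_swap hpq hne y]
  simp only [Function.comp_apply]
  simp only [swap_lt_iff hpq h1 h2,
    swap_lt_iff hpq (fun h => h2 ⟨h.2, h.1⟩) (fun h => h1 ⟨h.2, h.1⟩)]


/-- if λ is (k+1,r−1)-admissible but s_i·λ is not, then 1 ≤ i ≤ n−1, s_i·λ has
exactly one neighborhood, which is the pair (i,i+1) or (i+1,i), and
(s_i·λ)_i − (s_i·λ)_{i+1} = −(r−1), ρ(s_i·λ)_i − ρ(s_i·λ)_{i+1} = −k. -/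
theorem stmt4 (n : ℕ) (hn : 2 ≤ n) (k r : ℤ)
    (hk2 : 2 ≤ k + 1) (hkn : k + 1 ≤ (n : ℤ)) (hr : 1 ≤ r - 1)
    (lam : Fin n → ℤ) (i : ℕ) (hi : i ≤ n)
    (hadm : Admissible (k + 1) (r - 1) lam)
    (hnadm : ¬ Admissible (k + 1) (r - 1) (dotAct i lam)) :
    1 ≤ i ∧ i ≤ n - 1 ∧
    ∃ j j2 : Fin n, (j : ℕ) = i - 1 ∧ (j2 : ℕ) = i ∧
      nbhdCount (k + 1) (r - 1) (dotAct i lam) = 1 ∧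
      (IsNbhd (k + 1) (r - 1) (dotAct i lam) j j2 ∨
        IsNbhd (k + 1) (r - 1) (dotAct i lam) j2 j) ∧
      dotAct i lam j - dotAct i lam j2 = -(r - 1) ∧
      rho (dotAct i lam) j - rho (dotAct i lam) j2 = -k := by
  have hn0 : 0 < n := by omega
  obtain ⟨x, y, hxy⟩ : ∃ x y, IsNbhd (k + 1) (r - 1) (dotAct i lam) x y := by
    by_contra h
    push_neg at h
    exact hnadm h
  have hi0 : i ≠ 0 := by rintro rfl; exact adm_dotAct0 hn hk2 hr hadm x y hxy
  have hinn : i ≠ n := by rintro rfl; exact adm_dotActn hn hk2 hr hadm x y hxy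
  have hilt : i < n := lt_of_le_of_ne hi hinn
  have hlt1 : i - 1 < n := by omega
  set p : Fin n := ⟨i - 1, hlt1⟩ with hpdef
  set q : Fin n := ⟨i, hilt⟩ with hqdef
  have hpval : (p : ℕ) = i - 1 := rfl
  have hqval : (q : ℕ) = i := rfl
  have hpq : (p : ℕ) + 1 = (q : ℕ) := by omega
  have hswap : dotAct i lam = lam ∘ Equiv.swap p q := dotAct_swap lam i hi0 hilt
  have hne : lam p ≠ lam q := by
    intro hpqeq
    apply hadm x y
    have hid : dotAct i lam = lam := by
      rw [hswap]; funext w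
      rcases eq_or_ne w p with rfl | hwp
      · simp [hpqeq]
      rcases eq_or_ne w q with rfl | hwq
      · simp [hpqeq]
      · simp [Equiv.swap_apply_of_ne_of_ne hwp hwq]
    rwa [hid] at hxy
  rw [hswap] at hxy
  have hxy' := hxy
  have hrs : ∀ u, rho (lam ∘ Equiv.swap p q) u = rho lam (Equiv.swap p q u) :=
    rho_swap hpq hne
  have hvp : (lam ∘ Equiv.swap p q) p = lam q := by simp
  have hvq : (lam ∘ Equiv.swap p q) q = lam p := by simp
  have hplt : p < q := by rw [Fin.lt_def]; omega
  have hqnlt : ¬ q < p := by rw [Fin.lt_def]; omega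
  have hkey : ∀ u v : Fin n, IsNbhd (k + 1) (r - 1) (lam ∘ Equiv.swap p q) u v →
      (u = p ∧ v = q) ∨ (u = q ∧ v = p) := by
    intro u v huv
    by_contra hcon
    exact hadm _ _ ((nbhd_swap hpq hne (fun h => hcon (Or.inl h))
      (fun h => hcon (Or.inr h))).1 huv)
  refine ⟨by omega, by omega, p, q, rfl, rfl, ?_⟩
  rcases hkey x y hxy with ⟨rfl, rfl⟩ | ⟨rfl, rfl⟩
  · -- the neighborhood is (p, q)
    obtain ⟨c1, c2, c3⟩ := hxy
    rw [hrs p, hrs q, Equiv.swap_apply_left, Equiv.swap_apply_right] at c1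
    rw [hvp, hvq] at c2 c3
    have hC : ¬ (|lam q| - |lam p| = r - 1 →
        ((0 ≤ lam q ∧ 0 ≤ lam p ∧ p < q) ∨ (lam q < 0 ∧ lam p < 0 ∧ q < p) ∨
         (lam q < 0 ∧ 0 ≤ lam p))) := fun hC => hadm q p ⟨c1, c2, hC⟩
    rw [Classical.not_imp] at hC
    obtain ⟨heq, hopt⟩ := hC
    have hopt2 := c3 heq
    have hsigns : lam p < 0 ∧ lam q < 0 := by
      simp only [hplt, hqnlt, iff_true, iff_false, true_and, and_true, and_false, false_and,
        true_or, or_true, or_false, false_or] at hopt hopt2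
      omega
    have hrq : rho lam q = -((n : ℤ) - 1 - (posOf lam q : ℤ)) := by
      unfold rho sgn; rw [if_neg (not_le.2 hsigns.2)]; ring
    have hrp : rho lam p = -((n : ℤ) - 1 - (posOf lam p : ℤ)) := by
      unfold rho sgn; rw [if_neg (not_le.2 hsigns.1)]; ring
    have haq := abs_rho lam q
    have hap := abs_rho lam p
    refine ⟨?_, ?_, ?_, ?_⟩
    · unfold nbhdCount
      rw [Finset.card_eq_one]
      refine ⟨(p, q), ?_⟩
      ext z
      simp only [Finset.mem_filter, Finset.mem_univ, true_and, Finset.mem_singleton]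
      constructor
      · intro hz
        rw [hswap] at hz
        rcases hkey z.1 z.2 hz with ⟨h1, h2⟩ | ⟨h1, h2⟩
        · exact Prod.ext h1 h2
        · exfalso
          obtain ⟨d1, -, -⟩ := hz
          rw [h1, h2, hrs q, hrs p, Equiv.swap_apply_left, Equiv.swap_apply_right] at d1
          omega
      · rintro rfl
        rw [hswap]
        exact hxy'
    · rw [hswap]
      exact Or.inl hxy'
    · rw [hswap]
      show (lam ∘ Equiv.swap p q) p - (lam ∘ Equiv.swap p q) q = -(r - 1)
      rw [hvp, hvq]
      rcases abs_cases (lam p) with ⟨e1, s1⟩ | ⟨e1, s1⟩ <;>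
      rcases abs_cases (lam q) with ⟨e2, s2⟩ | ⟨e2, s2⟩ <;>
      rw [e1, e2] at heq <;> omega
    · rw [hswap]
      show rho (lam ∘ Equiv.swap p q) p - rho (lam ∘ Equiv.swap p q) q = -k
      rw [hrs p, hrs q, Equiv.swap_apply_left, Equiv.swap_apply_right]
      omega
  · -- the neighborhood is (q, p)
    obtain ⟨c1, c2, c3⟩ := hxy
    rw [hrs q, hrs p, Equiv.swap_apply_left, Equiv.swap_apply_right] at c1
    rw [hvq, hvp] at c2 c3
    have hC : ¬ (|lam p| - |lam q| = r - 1 →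
        ((0 ≤ lam p ∧ 0 ≤ lam q ∧ q < p) ∨ (lam p < 0 ∧ lam q < 0 ∧ p < q) ∨
         (lam p < 0 ∧ 0 ≤ lam q))) := fun hC => hadm p q ⟨c1, c2, hC⟩
    rw [Classical.not_imp] at hC
    obtain ⟨heq, hopt⟩ := hC
    have hopt2 := c3 heq
    have hsigns : 0 ≤ lam p ∧ 0 ≤ lam q := by
      simp only [hplt, hqnlt, iff_true, iff_false, true_and, and_true, and_false, false_and,
        true_or, or_true, or_false, false_or] at hopt hopt2
      omega
    have hrq : rho lam q = (n : ℤ) - 1 - (posOf lam q : ℤ) := by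
      unfold rho sgn; rw [if_pos hsigns.2]; ring
    have hrp : rho lam p = (n : ℤ) - 1 - (posOf lam p : ℤ) := by
      unfold rho sgn; rw [if_pos hsigns.1]; ring
    have haq := abs_rho lam q
    have hap := abs_rho lam p
    refine ⟨?_, ?_, ?_, ?_⟩
    · unfold nbhdCount
      rw [Finset.card_eq_one]
      refine ⟨(q, p), ?_⟩
      ext z
      simp only [Finset.mem_filter, Finset.mem_univ, true_and, Finset.mem_singleton]
      constructor
      · intro hz
        rw [hswap] at hz
        rcases hkey z.1 z.2 hz with ⟨h1, h2⟩ | ⟨h1, h2⟩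
        · exfalso
          obtain ⟨d1, -, -⟩ := hz
          rw [h1, h2, hrs p, hrs q, Equiv.swap_apply_left, Equiv.swap_apply_right] at d1
          omega
        · exact Prod.ext h1 h2
      · rintro rfl
        rw [hswap]
        exact hxy'
    · rw [hswap]
      exact Or.inr hxy'
    · rw [hswap]
      show (lam ∘ Equiv.swap p q) p - (lam ∘ Equiv.swap p q) q = -(r - 1)
      rw [hvp, hvq]
      rcases abs_cases (lam p) with ⟨e1, s1⟩ | ⟨e1, s1⟩ <;>
      rcases abs_cases (lam q) with ⟨e2, s2⟩ | ⟨e2, s2⟩ <;>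
      rw [e1, e2] at heq <;> omega
    · rw [hswap]
      show rho (lam ∘ Equiv.swap p q) p - rho (lam ∘ Equiv.swap p q) q = -k
      rw [hrs p, hrs q, Equiv.swap_apply_left, Equiv.swap_apply_right]
      omega

end CCnDAHA
end

section
/- Let k ≥ 1 and m ≥ 1 be integers, n = k·m, and let K be a field with q, t ∈ K^× satisfying t^{k+1}·q^{k} = 1. Then the Laurent polynomial ∏_{1 ≤ i < j ≤ n} (x_i x_j^{−1} − t^{−1})(x_j − t^{−1}x_i^{−1}) in K[x_1^{±1},…,x_n^{±1}] satisfies the 1-wheel condition of type (k+1, k). -/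
open scoped Classical

namespace CCnDAHA

variable {n : ℕ}




/-- Laurent polynomial ring in N variables over K. -/
abbrev LaurentMv (K : Type*) [CommRing K] (N : ℕ) : Type _ := AddMonoidAlgebra K (Fin N →₀ ℤ)

/-- evaluation of a Laurent polynomial at a point z. -/
noncomputable def evalAt {K : Type*} [Field K] (z : Fin n → K) (f : LaurentMv K n) : K :=
  Finsupp.sum f.coeff (fun v c => c * ∏ i, z i ^ (v i))

/-- cyclic successor in Fin k1. -/
def finSucc {k1 : ℕ} (m : Fin k1) : Fin k1 :=
  ⟨((m : ℕ) + 1) % k1, Nat.mod_lt _ (by have := m.isLt; omega)⟩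

/-- A wheel of type (k1, r1) in z, with parameters t, q. -/
def IsWheel {K : Type*} [Field K] (k1 r1 : ℕ) (t q : K) (z : Fin n → Kˣ)
    (idx : Fin k1 → Fin n) (sg : Fin k1 → ℤ) (p : Fin k1 → ℕ) : Prop :=
  Function.Injective idx ∧
  (∀ m, sg m = 1 ∨ sg m = -1) ∧
  (∑ m, p m) = r1 ∧
  (∀ m : Fin k1, ((z (idx m) : K) ^ (sg m)) * t * q ^ (p m)
      = (z (idx (finSucc m)) : K) ^ (sg (finSucc m))) ∧
  (∀ m : Fin k1, p m = 0 →
    (sg m = 1 ∧ sg (finSucc m) = 1 ∧ idx m < idx (finSucc m)) ∨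
    (sg m = 1 ∧ sg (finSucc m) = -1) ∨
    (sg m = -1 ∧ sg (finSucc m) = -1 ∧ idx (finSucc m) < idx m))

/-- z admits mw wheels of type (k1,r1) with pairwise disjoint index sets. -/
def HasWheels {K : Type*} [Field K] (k1 r1 : ℕ) (t q : K) (mw : ℕ) (z : Fin n → Kˣ) : Prop :=
  ∃ (idx : Fin mw → Fin k1 → Fin n) (sg : Fin mw → Fin k1 → ℤ) (p : Fin mw → Fin k1 → ℕ),
    (∀ a, IsWheel k1 r1 t q z (idx a) (sg a) (p a)) ∧
    (∀ a b, a ≠ b → ∀ m m', idx a m ≠ idx b m')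

/-- the mw-wheel condition of type (k1, r1). -/
def SatisfiesWheel {K : Type*} [Field K] (k1 r1 : ℕ) (t q : K) (mw : ℕ)
    (f : LaurentMv K n) : Prop :=
  ∀ z : Fin n → Kˣ, HasWheels k1 r1 t q mw z → evalAt (fun i => (z i : K)) f = 0

/-- The six-variable Laurent polynomial ring A (variables Q,T,T_n,T_0,U_n,U_0 = 0,…,5). -/
abbrev A6 : Type := AddMonoidAlgebra ℂ (Fin 6 →₀ ℤ)

/-- image of x ∈ A in the fraction field K_s of A/(s). -/
noncomputable def bar (s : A6) (x : A6) : FractionRing (A6 ⧸ Ideal.span {s}) :=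
  algebraMap (A6 ⧸ Ideal.span {s}) (FractionRing (A6 ⧸ Ideal.span {s}))
    (Ideal.Quotient.mk (Ideal.span {s}) x)

/-- the permutation action s_i f (1 ≤ i ≤ n−1), swapping the variables x_i, x_j. -/
noncomputable def sSwap {K : Type*} [CommRing K] (i j : Fin n) (f : LaurentMv K n) :
    LaurentMv K n :=
  Finsupp.sum f.coeff (fun v c =>
    AddMonoidAlgebra.single (Finsupp.equivMapDomain (Equiv.swap i j) v) c)

/-- the action s_n f : x_i ↦ x_i⁻¹. -/
noncomputable def sNeg {K : Type*} [CommRing K] (i : Fin n) (f : LaurentMv K n) :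
    LaurentMv K n :=
  Finsupp.sum f.coeff (fun v c => AddMonoidAlgebra.single (Finsupp.update v i (-(v i))) c)

/-- the action s_0 f : x_i ↦ q·x_i⁻¹. -/
noncomputable def sNegQ {K : Type*} [Field K] (q : K) (i : Fin n) (f : LaurentMv K n) :
    LaurentMv K n :=
  Finsupp.sum f.coeff (fun v c =>
    AddMonoidAlgebra.single (Finsupp.update v i (-(v i))) (c * q ^ (v i)))

/-- defining relation of the Noumi operator T̂_i (1 ≤ i ≤ n−1), for the adjacent pair (i,j):
(1 − x_i x_j^{−1})(g − t^{1/2} f) = t^{−1/2}(1 − t x_i x_j^{−1})(s_i f − f). -/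
def RelMid {K : Type*} [Field K] (th : K) (i j : Fin n) (f g : LaurentMv K n) : Prop :=
  (AddMonoidAlgebra.single 0 1
      - AddMonoidAlgebra.single (Finsupp.single i 1 + Finsupp.single j (-1)) (1 : K))
      * (g - th • f)
    = th⁻¹ • ((AddMonoidAlgebra.single 0 1
      - AddMonoidAlgebra.single (Finsupp.single i 1 + Finsupp.single j (-1)) (th ^ 2))
      * (sSwap i j f - f))

/-- defining relation of T̂_n (i is the last variable):
(1 − x_i²)(g − t_n^{1/2} f) = t_n^{−1/2}(1 − a x_i)(1 − b x_i)(s_n f − f). -/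
def RelLast {K : Type*} [Field K] (tnh a b : K) (i : Fin n) (f g : LaurentMv K n) : Prop :=
  (AddMonoidAlgebra.single 0 1 - AddMonoidAlgebra.single (Finsupp.single i 2) (1 : K))
      * (g - tnh • f)
    = tnh⁻¹ • (((AddMonoidAlgebra.single 0 1 - AddMonoidAlgebra.single (Finsupp.single i 1) a)
        * (AddMonoidAlgebra.single 0 1 - AddMonoidAlgebra.single (Finsupp.single i 1) b))
      * (sNeg i f - f))

/-- defining relation of T̂_0 (i is the first variable):
(1 − q x_i^{−2})(g − t_0^{1/2} f) = t_0^{−1/2}(1 − c x_i^{−1})(1 − d x_i^{−1})(s_0 f − f). -/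
def RelZero {K : Type*} [Field K] (t0h q c d : K) (i : Fin n) (f g : LaurentMv K n) : Prop :=
  (AddMonoidAlgebra.single 0 1 - AddMonoidAlgebra.single (Finsupp.single i (-2)) q)
      * (g - t0h • f)
    = t0h⁻¹ • (((AddMonoidAlgebra.single 0 1 - AddMonoidAlgebra.single (Finsupp.single i (-1)) c)
        * (AddMonoidAlgebra.single 0 1 - AddMonoidAlgebra.single (Finsupp.single i (-1)) d))
      * (sNegQ q i f - f))



/-- evaluation at a point of units, as an algebra homomorphism. -/
noncomputable def evalHom {K : Type*} [Field K] (z : Fin n → Kˣ) : LaurentMv K n →ₐ[K] K :=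
  AddMonoidAlgebra.lift K K (Fin n →₀ ℤ)
    { toFun := fun v => ∏ i, ((z i : K)) ^ (Multiplicative.toAdd v i)
      map_one' := Finset.prod_eq_one fun i _ => by
        have h : Multiplicative.toAdd (1 : Multiplicative (Fin n →₀ ℤ)) i = 0 := rfl
        rw [h, zpow_zero]
      map_mul' := fun a b => by
        have h : ∀ i : Fin n, ((z i : K)) ^ (Multiplicative.toAdd (a * b) i)
            = ((z i : K)) ^ (Multiplicative.toAdd a i)
              * ((z i : K)) ^ (Multiplicative.toAdd b i) :=
          fun i => zpow_add₀ (z i).ne_zero _ _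
        simp only [h, Finset.prod_mul_distrib] }

lemma evalAt_eq {K : Type*} [Field K] (z : Fin n → Kˣ) (f : LaurentMv K n) :
    evalAt (fun i => (z i : K)) f = evalHom z f := by
  rw [evalHom, AddMonoidAlgebra.lift_apply]
  rfl

lemma evalHom_single {K : Type*} [Field K] (z : Fin n → Kˣ) (v : Fin n →₀ ℤ) (c : K) :
    evalHom z (AddMonoidAlgebra.single v c) = c * ∏ i, (z i : K) ^ (v i) := by
  simp [evalHom, AddMonoidAlgebra.lift_single]

lemma prod_zpow_add {K : Type*} [Field K] (z : Fin n → Kˣ) (u v : Fin n →₀ ℤ) :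
    (∏ i, ((z i : K)) ^ ((u + v) i))
      = (∏ i, ((z i : K)) ^ (u i)) * ∏ i, ((z i : K)) ^ (v i) := by
  rw [← Finset.prod_mul_distrib]
  exact Finset.prod_congr rfl fun i _ => by
    rw [Finsupp.add_apply, zpow_add₀ (z i).ne_zero]

lemma prod_zpow_single {K : Type*} [Field K] (z : Fin n → Kˣ) (i : Fin n) (e : ℤ) :
    (∏ i', ((z i' : K)) ^ ((Finsupp.single i e) i')) = (z i : K) ^ e := by
  rw [Finset.prod_eq_single i]
  · simp
  · intro b _ hb
    simp [Finsupp.single_apply, Ne.symm hb]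
  · simp

lemma eval_fac1 {K : Type*} [Field K] (z : Fin n → Kˣ) (t : K) (a b : Fin n) :
    evalHom z (AddMonoidAlgebra.single (Finsupp.single a 1 + Finsupp.single b (-1)) (1 : K)
      - AddMonoidAlgebra.single 0 t⁻¹) = (z a : K) * (z b : K)⁻¹ - t⁻¹ := by
  rw [map_sub, evalHom_single, evalHom_single, prod_zpow_add, prod_zpow_single,
    prod_zpow_single]
  simp

lemma eval_fac2 {K : Type*} [Field K] (z : Fin n → Kˣ) (t : K) (a b : Fin n) :
    evalHom z (AddMonoidAlgebra.single (Finsupp.single b 1) (1 : K)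
      - AddMonoidAlgebra.single (Finsupp.single a (-1)) t⁻¹)
      = (z b : K) - t⁻¹ * (z a : K)⁻¹ := by
  rw [map_sub, evalHom_single, evalHom_single, prod_zpow_single, prod_zpow_single]
  simp

lemma finSucc_ne {k : ℕ} (hk : 1 ≤ k) (m : Fin (k + 1)) : m ≠ finSucc m := by
  intro h
  have h2 := congrArg Fin.val h
  simp only [finSucc] at h2
  have hlt := m.isLt
  rcases Nat.lt_or_ge ((m : ℕ) + 1) (k + 1) with h' | h'
  · rw [Nat.mod_eq_of_lt h'] at h2; omega
  · have hm : (m : ℕ) = k := by omega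
    rw [hm] at h2
    simp [Nat.mod_self] at h2
    omega

/-- for t^{k+1}q^k = 1 and n = km, the Laurent polynomial
∏_{1≤i<j≤n} (x_i x_j⁻¹ − t⁻¹)(x_j − t⁻¹ x_i⁻¹)
satisfies the 1-wheel condition of type (k+1,k). -/
theorem stmt7 {K : Type*} [Field K] (k m : ℕ) (hk : 1 ≤ k) (hm : 1 ≤ m)
    (t q : K) (ht : t ≠ 0) (hq : q ≠ 0) (hspec : t ^ (k + 1) * q ^ k = 1) :
    SatisfiesWheel (n := k * m) (k + 1) k t q 1
      (∏ p ∈ (Finset.univ : Finset (Fin (k * m) × Fin (k * m))).filter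
          (fun p => p.1 < p.2),
        ((AddMonoidAlgebra.single (Finsupp.single p.1 1 + Finsupp.single p.2 (-1)) (1 : K)
            - AddMonoidAlgebra.single 0 t⁻¹)
          * (AddMonoidAlgebra.single (Finsupp.single p.2 1) 1
            - AddMonoidAlgebra.single (Finsupp.single p.1 (-1)) t⁻¹))) := by
  intro z hz
  obtain ⟨idx, sg, p, hwheel, -⟩ := hz
  obtain ⟨hinj, hsg, hsum, hrel, hp0⟩ := hwheel 0
  -- find a spoke with p = 0
  have hex : ∃ m0 : Fin (k + 1), p 0 m0 = 0 := by
    by_contra h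
    push_neg at h
    have h2 : k + 1 ≤ ∑ m0, p 0 m0 := by
      calc k + 1 = ∑ _m0 : Fin (k + 1), 1 := by simp
        _ ≤ _ := Finset.sum_le_sum fun i _ => Nat.one_le_iff_ne_zero.2 (h i)
    omega
  obtain ⟨m0, hm0⟩ := hex
  set a := idx 0 m0 with ha
  set b := idx 0 (finSucc m0) with hb
  have hne : a ≠ b := fun h => finSucc_ne hk m0 (hinj h)
  have heq := hrel m0
  rw [hm0, pow_zero, mul_one] at heq
  have hza : (z a : K) ≠ 0 := (z a).ne_zero
  have hzb : (z b : K) ≠ 0 := (z b).ne_zero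
  have key : ∃ pr : Fin (k * m) × Fin (k * m), pr.1 < pr.2 ∧
      ((z pr.1 : K) * (z pr.2 : K)⁻¹ - t⁻¹ = 0 ∨
        (z pr.2 : K) - t⁻¹ * (z pr.1 : K)⁻¹ = 0) := by
    rcases hp0 m0 hm0 with ⟨h1, h2, hlt⟩ | ⟨h1, h2⟩ | ⟨h1, h2, hlt⟩
    · refine ⟨(a, b), hlt, Or.inl ?_⟩
      rw [h1, h2, zpow_one, zpow_one] at heq
      rw [sub_eq_zero, ← heq, mul_inv, ← mul_assoc, mul_inv_cancel₀ hza, one_mul]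
    · rw [h1, h2, zpow_one, zpow_neg_one] at heq
      have hb' : (z b : K) = ((z a : K) * t)⁻¹ := by rw [heq, inv_inv]
      rcases lt_or_gt_of_ne hne with hab | hab
      · refine ⟨(a, b), hab, Or.inr ?_⟩
        rw [hb', mul_inv, sub_eq_zero, mul_comm]
      · refine ⟨(b, a), hab, Or.inr ?_⟩
        rw [sub_eq_zero, ← heq, mul_comm ((z a : K)) t, ← mul_assoc,
          inv_mul_cancel₀ ht, one_mul]
    · refine ⟨(b, a), hlt, Or.inl ?_⟩
      rw [h1, h2, zpow_neg_one, zpow_neg_one] at heq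
      have hb' : (z b : K) = ((z a : K)⁻¹ * t)⁻¹ := by rw [heq, inv_inv]
      rw [sub_eq_zero, hb', mul_inv, inv_inv, mul_right_comm,
        mul_inv_cancel₀ hza, one_mul]
  obtain ⟨pr, hlt, hcase⟩ := key
  rw [evalAt_eq, map_prod]
  refine Finset.prod_eq_zero (i := pr) (Finset.mem_filter.2 ⟨Finset.mem_univ _, hlt⟩) ?_
  rw [map_mul]
  rcases hcase with h | h
  · rw [eval_fac1, h, zero_mul]
  · rw [eval_fac2, h, mul_zero]

end CCnDAHA
end
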